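/- Let p ≡ 7 (mod 8) be prime and let C = {(r_Q·r_S, r_N·r_S) : S ⊆ 𝔽_p} ⊆ 𝔽₂^{2p} be the QQR code, and Q, N the binary quadratic residue codes {r_Q·r_S : S ⊆ 𝔽_p} and {r_N·r_S : S ⊆ 𝔽_p} of length p. Then C equals the even-weight subcode of the direct sum Q ⊕ N. -/

import Mathlib

open Classical in
/-- `r_T = ∑_{a ∈ T} x^a` in the group algebra `𝔽₂[x]/(x^p − 1) ≅ 𝔽₂[ℤ/pℤ]`. -/
noncomputable def rT (p : ℕ) (T : Finset (ZMod p)) :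
    AddMonoidAlgebra (ZMod 2) (ZMod p) :=
  ∑ a ∈ T, AddMonoidAlgebra.single a 1

open Classical in
/-- `r_Q`, for `Q` the set of nonzero quadratic residues mod `p`. -/
noncomputable def rQ (p : ℕ) [NeZero p] : AddMonoidAlgebra (ZMod 2) (ZMod p) :=
  rT p (Finset.univ.filter fun a => a ≠ 0 ∧ IsSquare a)

open Classical in
/-- `r_N`, for `N` the set of quadratic non-residues mod `p`. -/
noncomputable def rN (p : ℕ) [NeZero p] : AddMonoidAlgebra (ZMod 2) (ZMod p) :=
  rT p (Finset.univ.filter fun b => b ≠ 0 ∧ ¬ IsSquare b)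

/-- Hamming weight of a word, identified with an element of the group algebra. -/
def wt {p : ℕ} (u : AddMonoidAlgebra (ZMod 2) (ZMod p)) : ℕ := u.coeff.support.card

/-! ### Auxiliary lemmas -/

set_option linter.unusedSectionVars false

lemma qqr_addSelf {p : ℕ} (z : AddMonoidAlgebra (ZMod 2) (ZMod p)) : z + z = 0 := by
  have : z + z = ((1 : ZMod 2) + 1) • z := by rw [add_smul, one_smul]
  rw [this, (by decide : (1 : ZMod 2) + 1 = 0), zero_smul]

/-- The augmentation map. -/
noncomputable def qqrEps (p : ℕ) : AddMonoidAlgebra (ZMod 2) (ZMod p) →ₐ[ZMod 2] ZMod 2 :=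
  AddMonoidAlgebra.lift (ZMod 2) (ZMod 2) (ZMod p) 1

lemma qqrEps_single (p : ℕ) (a : ZMod p) (b : ZMod 2) :
    qqrEps p (AddMonoidAlgebra.single a b) = b := by
  simp [qqrEps, AddMonoidAlgebra.lift_single]

lemma qqr_rT_support (p : ℕ) (u : AddMonoidAlgebra (ZMod 2) (ZMod p)) :
    rT p u.coeff.support = u := by
  classical
  conv_rhs => rw [← AddMonoidAlgebra.sum_coeff_single u]
  rw [rT, Finsupp.sum]
  refine Finset.sum_congr rfl fun a ha => ?_
  have h1 : u.coeff a = 1 := by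
    have h0 : u.coeff a ≠ 0 := Finsupp.mem_support_iff.mp ha
    revert h0; exact (by decide : ∀ x : ZMod 2, x ≠ 0 → x = 1) _
  rw [h1]

lemma qqrEps_rT (p : ℕ) (T : Finset (ZMod p)) :
    qqrEps p (rT p T) = (T.card : ZMod 2) := by
  classical
  simp [rT, map_sum, qqrEps_single]

lemma qqrEps_eq_wt (p : ℕ) (u : AddMonoidAlgebra (ZMod 2) (ZMod p)) :
    qqrEps p u = (wt u : ZMod 2) := by
  conv_lhs => rw [← qqr_rT_support p u]
  rw [qqrEps_rT]; rfl

/-- The all-ones word. -/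
noncomputable def qqrJ (p : ℕ) [NeZero p] : AddMonoidAlgebra (ZMod 2) (ZMod p) :=
  rT p Finset.univ

lemma qqrJ_mul_single (p : ℕ) [NeZero p] (a : ZMod p) :
    qqrJ p * AddMonoidAlgebra.single a 1 = qqrJ p := by
  classical
  rw [qqrJ, rT, Finset.sum_mul]
  simp only [AddMonoidAlgebra.single_mul_single, mul_one]
  exact Finset.sum_equiv (Equiv.addRight a) (by simp) (by simp)

lemma qqrJ_mul (p : ℕ) [NeZero p] (u : AddMonoidAlgebra (ZMod 2) (ZMod p)) :
    qqrJ p * u = qqrEps p u • qqrJ p := by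
  classical
  induction u using AddMonoidAlgebra.induction_linear with
  | zero => simp
  | add f g hf hg => rw [mul_add, hf, hg, map_add, add_smul]
  | single a b =>
      have hb : (AddMonoidAlgebra.single a b : AddMonoidAlgebra (ZMod 2) (ZMod p))
          = b • AddMonoidAlgebra.single a 1 := by
        rw [AddMonoidAlgebra.smul_single, smul_eq_mul, mul_one]
      show qqrJ p * AddMonoidAlgebra.single a b
          = qqrEps p (AddMonoidAlgebra.single a b) • qqrJ p
      rw [hb, mul_smul_comm, qqrJ_mul_single, map_smul, qqrEps_single, smul_assoc, one_smul]

lemma qqr_rT_sq (p : ℕ) (T : Finset (ZMod p)) :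
    rT p T * rT p T = ∑ a ∈ T, AddMonoidAlgebra.single (a + a) (1 : ZMod 2) := by
  classical
  induction T using Finset.induction with
  | empty => simp [rT]
  | @insert a s ha ih =>
      rw [rT, Finset.sum_insert ha, ← rT, Finset.sum_insert ha, add_mul, mul_add, mul_add]
      rw [AddMonoidAlgebra.single_mul_single, mul_one, ih]
      have hc : AddMonoidAlgebra.single a (1:ZMod 2) * rT p s
          = rT p s * AddMonoidAlgebra.single a 1 := mul_comm _ _
      rw [hc]
      rw [add_assoc, ← add_assoc (rT p s * AddMonoidAlgebra.single a 1), qqr_addSelf, zero_add]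

section
variable (p : ℕ) [Fact p.Prime]

lemma qqr_p_ne_two (hp : p % 8 = 7) : p ≠ 2 := by
  intro h; rw [h] at hp; omega

lemma qqr_two_ne_zero (hp : p % 8 = 7) : (2 : ZMod p) ≠ 0 := by
  intro h
  have h2 : ((2 : ℕ) : ZMod p) = 0 := by exact_mod_cast h
  have hdvd := (ZMod.natCast_eq_zero_iff 2 p).mp h2
  have hle := Nat.le_of_dvd (by norm_num) hdvd
  omega

lemma qqr_isSquare_two (hp : p % 8 = 7) : IsSquare (2 : ZMod p) :=
  (ZMod.exists_sq_eq_two_iff (qqr_p_ne_two p hp)).mpr (Or.inr hp)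

lemma qqr_isSquare_two_mul_iff (hp : p % 8 = 7) (a : ZMod p) :
    IsSquare (2 * a) ↔ IsSquare a := by
  constructor
  · intro h
    have ha : a = (2 : ZMod p)⁻¹ * (2 * a) := by
      rw [inv_mul_cancel_left₀ (qqr_two_ne_zero p hp)]
    rw [ha]
    exact (isSquare_inv.mpr (qqr_isSquare_two p hp)).mul h
  · exact fun h => (qqr_isSquare_two p hp).mul h

lemma qqr_two_mul_mem_iff (hp : p % 8 = 7) (a : ZMod p) :
    ((2 * a ≠ 0 ∧ IsSquare (2 * a)) ↔ (a ≠ 0 ∧ IsSquare a)) := by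
  rw [qqr_isSquare_two_mul_iff p hp, mul_ne_zero_iff]
  exact and_congr_left' ⟨fun h => h.2, fun h => ⟨qqr_two_ne_zero p hp, h⟩⟩

open Classical in
lemma qqr_rQ_idem (hp : p % 8 = 7) : rQ p * rQ p = rQ p := by
  classical
  rw [rQ, qqr_rT_sq, rT]
  refine Finset.sum_equiv (Equiv.mulLeft₀ (2 : ZMod p) (qqr_two_ne_zero p hp)) ?_ ?_
  · intro a
    simp only [Finset.mem_filter, Finset.mem_univ, true_and, Equiv.mulLeft₀_apply]
    exact (qqr_two_mul_mem_iff p hp a).symm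
  · intro a _
    simp only [Equiv.mulLeft₀_apply, two_mul]

open Classical in
lemma qqr_rN_idem (hp : p % 8 = 7) : rN p * rN p = rN p := by
  classical
  rw [rN, qqr_rT_sq, rT]
  refine Finset.sum_equiv (Equiv.mulLeft₀ (2 : ZMod p) (qqr_two_ne_zero p hp)) ?_ ?_
  · intro a
    simp only [Finset.mem_filter, Finset.mem_univ, true_and, Equiv.mulLeft₀_apply]
    constructor
    · rintro ⟨h1, h2⟩
      exact ⟨mul_ne_zero (qqr_two_ne_zero p hp) h1,
        fun hs => h2 ((qqr_isSquare_two_mul_iff p hp a).mp hs)⟩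
    · rintro ⟨h1, h2⟩
      exact ⟨fun h0 => h1 (by rw [h0, mul_zero]),
        fun hs => h2 ((qqr_isSquare_two_mul_iff p hp a).mpr hs)⟩
  · intro a _
    simp only [Equiv.mulLeft₀_apply, two_mul]

open Classical in
lemma qqr_cardQ_eq_cardN (hp : p % 8 = 7) :
    (Finset.univ.filter fun a : ZMod p => a ≠ 0 ∧ IsSquare a).card
      = (Finset.univ.filter fun b : ZMod p => b ≠ 0 ∧ ¬ IsSquare b).card := by
  classical
  obtain ⟨c, hc⟩ := FiniteField.exists_nonsquare
    (by rw [ZMod.ringChar_zmod_n]; exact qqr_p_ne_two p hp : ringChar (ZMod p) ≠ 2)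
  have hc0 : c ≠ 0 := fun h => hc (h ▸ IsSquare.zero)
  have nonsq_mul : ∀ x y : ZMod p, x ≠ 0 → y ≠ 0 → ¬IsSquare x → ¬IsSquare y →
      IsSquare (x * y) := by
    intro x y hx hy hsx hsy
    have h1 : quadraticChar (ZMod p) x = -1 :=
      quadraticChar_neg_one_iff_not_isSquare.mpr hsx
    have h2 : quadraticChar (ZMod p) y = -1 :=
      quadraticChar_neg_one_iff_not_isSquare.mpr hsy
    have h3 : quadraticChar (ZMod p) (x * y) = 1 := by
      rw [map_mul, h1, h2]; ring
    exact (quadraticChar_one_iff_isSquare (mul_ne_zero hx hy)).mp h3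
  refine Finset.card_bij' (fun a _ => c * a) (fun b _ => c⁻¹ * b) ?_ ?_ ?_ ?_
  · intro a ha
    simp only [Finset.mem_filter, Finset.mem_univ, true_and] at ha ⊢
    refine ⟨mul_ne_zero hc0 ha.1, fun hs => hc ?_⟩
    have : c = (c * a) * a⁻¹ := by rw [mul_assoc, mul_inv_cancel₀ ha.1, mul_one]
    rw [this]
    exact hs.mul (isSquare_inv.mpr ha.2)
  · intro b hb
    simp only [Finset.mem_filter, Finset.mem_univ, true_and] at hb ⊢
    refine ⟨mul_ne_zero (inv_ne_zero hc0) hb.1, ?_⟩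
    exact nonsq_mul _ _ (inv_ne_zero hc0) hb.1 (fun h => hc (isSquare_inv.mp h)) hb.2
  · intro a _; show c⁻¹ * (c * a) = a; rw [inv_mul_cancel_left₀ hc0]
  · intro b _; show c * (c⁻¹ * b) = b; rw [mul_inv_cancel_left₀ hc0]

open Classical in
lemma qqr_card_add (hp : p % 8 = 7) :
    (Finset.univ.filter fun a : ZMod p => a ≠ 0 ∧ IsSquare a).card
      + (Finset.univ.filter fun b : ZMod p => b ≠ 0 ∧ ¬ IsSquare b).card = p - 1 := by
  classical
  have hdisj : Disjoint (Finset.univ.filter fun a : ZMod p => a ≠ 0 ∧ IsSquare a)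
      (Finset.univ.filter fun b : ZMod p => b ≠ 0 ∧ ¬ IsSquare b) := by
    rw [Finset.disjoint_left]
    intro a h1 h2
    simp only [Finset.mem_filter] at h1 h2
    exact h2.2.2 h1.2.2
  rw [← Finset.card_union_of_disjoint hdisj]
  have hU : ((Finset.univ.filter fun a : ZMod p => a ≠ 0 ∧ IsSquare a)
      ∪ (Finset.univ.filter fun b : ZMod p => b ≠ 0 ∧ ¬ IsSquare b))
      = Finset.univ.erase (0 : ZMod p) := by
    ext a
    simp only [Finset.mem_union, Finset.mem_filter, Finset.mem_univ, true_and,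
      Finset.mem_erase, and_true]
    tauto
  rw [hU, Finset.card_erase_of_mem (Finset.mem_univ _), Finset.card_univ, ZMod.card]

open Classical in
lemma qqrEps_rQ (hp : p % 8 = 7) : qqrEps p (rQ p) = 1 := by
  classical
  rw [rQ, qqrEps_rT]
  have h1 := qqr_cardQ_eq_cardN p hp
  have h2 := qqr_card_add p hp
  have h7 : 7 ≤ p := by have := (Fact.out : p.Prime).two_le; omega
  have hodd : (Finset.univ.filter fun a : ZMod p => a ≠ 0 ∧ IsSquare a).card % 2 = 1 := by
    omega
  rw [← ZMod.natCast_mod, hodd, Nat.cast_one]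

open Classical in
lemma qqrEps_rN (hp : p % 8 = 7) : qqrEps p (rN p) = 1 := by
  classical
  rw [rN, qqrEps_rT, ← qqr_cardQ_eq_cardN p hp]
  have := qqrEps_rQ p hp
  rw [rQ, qqrEps_rT] at this
  exact this

open Classical in
lemma qqr_e_add_f (hp : p % 8 = 7) : rQ p + rN p = 1 + qqrJ p := by
  classical
  have hdisj : Disjoint (Finset.univ.filter fun a : ZMod p => a ≠ 0 ∧ IsSquare a)
      (Finset.univ.filter fun b : ZMod p => b ≠ 0 ∧ ¬ IsSquare b) := by
    rw [Finset.disjoint_left]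
    intro a h1 h2
    simp only [Finset.mem_filter] at h1 h2
    exact h2.2.2 h1.2.2
  have hsum : rQ p + rN p = rT p (Finset.univ.erase (0 : ZMod p)) := by
    rw [rQ, rN, rT, rT, rT, ← Finset.sum_union hdisj]
    congr 1
    ext a
    simp only [Finset.mem_union, Finset.mem_filter, Finset.mem_univ, true_and,
      Finset.mem_erase, and_true]
    tauto
  have hJ : qqrJ p = AddMonoidAlgebra.single (0 : ZMod p) (1 : ZMod 2)
      + rT p (Finset.univ.erase (0 : ZMod p)) := by
    rw [qqrJ, rT, rT, ← Finset.add_sum_erase _ _ (Finset.mem_univ (0 : ZMod p))]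
  rw [hsum, hJ, AddMonoidAlgebra.one_def, ← add_assoc, qqr_addSelf, zero_add]

end

lemma qqr_even_iff (p : ℕ) (u v : AddMonoidAlgebra (ZMod 2) (ZMod p)) :
    Even (wt u + wt v) ↔ qqrEps p u = qqrEps p v := by
  rw [even_iff_two_dvd, ← CharP.cast_eq_zero_iff (ZMod 2) 2, Nat.cast_add,
    ← qqrEps_eq_wt, ← qqrEps_eq_wt]
  constructor
  · intro h
    have : ∀ a b : ZMod 2, a + b = 0 → a = b := by decide
    exact this _ _ h
  · intro h; rw [h]; exact (by decide : ∀ x : ZMod 2, x + x = 0) _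

theorem stmt15 (p : ℕ) [Fact p.Prime] (hp : p % 8 = 7) :
    {c : AddMonoidAlgebra (ZMod 2) (ZMod p) × AddMonoidAlgebra (ZMod 2) (ZMod p) |
        ∃ S : Finset (ZMod p), c = (rQ p * rT p S, rN p * rT p S)} =
      {c : AddMonoidAlgebra (ZMod 2) (ZMod p) × AddMonoidAlgebra (ZMod 2) (ZMod p) |
        (∃ S₁ : Finset (ZMod p), c.1 = rQ p * rT p S₁) ∧
        (∃ S₂ : Finset (ZMod p), c.2 = rN p * rT p S₂) ∧
        Even (wt c.1 + wt c.2)} := by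
  classical
  have hfe : rN p = 1 + qqrJ p + rQ p := by
    rw [← qqr_e_add_f p hp, add_comm (rQ p) (rN p), add_assoc, qqr_addSelf, add_zero]
  have heJ : rQ p * qqrJ p = qqrJ p := by
    rw [mul_comm, qqrJ_mul, qqrEps_rQ p hp, one_smul]
  have hfJ : rN p * qqrJ p = qqrJ p := by
    rw [mul_comm, qqrJ_mul, qqrEps_rN p hp, one_smul]
  have hef : rQ p * rN p = qqrJ p := by
    rw [hfe, mul_add, mul_add, mul_one, heJ, qqr_rQ_idem p hp, add_assoc,
      add_comm (qqrJ p) (rQ p), ← add_assoc, qqr_addSelf, zero_add]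
  ext c
  simp only [Set.mem_setOf_eq]
  constructor
  · rintro ⟨S, rfl⟩
    refine ⟨⟨S, rfl⟩, ⟨S, rfl⟩, ?_⟩
    rw [qqr_even_iff]
    simp only [map_mul, qqrEps_rQ p hp, qqrEps_rN p hp]
  · rintro ⟨⟨S₁, h₁⟩, ⟨S₂, h₂⟩, heven⟩
    set a := rT p S₁
    set b := rT p S₂
    have hab : qqrEps p a = qqrEps p b := by
      rw [qqr_even_iff, h₁, h₂, map_mul, map_mul, qqrEps_rQ p hp, qqrEps_rN p hp,
        one_mul, one_mul] at heven
      exact heven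
    set w := rQ p * a + rN p * b + qqrEps p a • qqrJ p with hw
    refine ⟨w.coeff.support, ?_⟩
    have hrw : rT p w.coeff.support = w := qqr_rT_support p w
    have he : rQ p * rT p w.coeff.support = rQ p * a := by
      rw [hrw, hw, mul_add, mul_add, ← mul_assoc, qqr_rQ_idem p hp, ← mul_assoc, hef,
        qqrJ_mul, mul_smul_comm, heJ, ← hab, add_assoc, qqr_addSelf, add_zero]
    have hf : rN p * rT p w.coeff.support = rN p * b := by
      rw [hrw, hw, mul_add, mul_add, ← mul_assoc, mul_comm (rN p) (rQ p), hef,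
        ← mul_assoc, qqr_rN_idem p hp, qqrJ_mul, mul_smul_comm, hfJ]
      rw [add_comm ((qqrEps p) a • qqrJ p) (rN p * b), add_assoc, qqr_addSelf, add_zero]
    rw [he, hf, ← h₁, ← h₂]
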